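/- arXiv:2505.09572 — 3 statements merged into one kernel-verified Lean document; each statement's English description precedes it below -/
import Mathlib

section
/- Let a < b be real numbers and let f : ℝⁿ → ℝ be a C¹ function with locally Lipschitz differential, where we write points of ℝⁿ as (t, x) with t ∈ ℝ and x ∈ ℝⁿ⁻¹. Then the function F : ℝⁿ⁻¹ → ℝ defined by F(x) = ∫ₐᵇ f(t, x) dt is C¹ and has locally Lipschitz differential. -/
open Filter MeasureTheory Set

noncomputable section

/-- A C¹ function has *locally Lipschitz differential* if around every point there is a
neighborhood on which the differential is Lipschitz. -/
def HasLocallyLipschitzDifferential {E F : Type*} [NormedAddCommGroup E] [NormedSpace ℝ E]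
    [NormedAddCommGroup F] [NormedSpace ℝ F] (f : E → F) : Prop :=
  ∀ x : E, ∃ U ∈ nhds x, ∃ L > 0, ∀ x₁ ∈ U, ∀ x₂ ∈ U,
    ‖fderiv ℝ f x₁ - fderiv ℝ f x₂‖ ≤ L * ‖x₁ - x₂‖

section aux

variable {k : ℕ}

local notation "E" => EuclideanSpace ℝ (Fin k)

/-- uniform Lipschitz bound on a tube -/
lemma tube_lemma (a b : ℝ) (f : ℝ × E → ℝ)
    (hf' : HasLocallyLipschitzDifferential f) (x₀ : E) :
    ∃ δ > 0, ∃ L > 0, ∀ t ∈ Icc a b, ∀ x₁ ∈ Metric.ball x₀ δ, ∀ x₂ ∈ Metric.ball x₀ δ,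
      ‖fderiv ℝ f (t, x₁) - fderiv ℝ f (t, x₂)‖ ≤ L * ‖x₁ - x₂‖ := by
  have key : ∀ t : ℝ, ∃ u ∈ nhds t, ∃ ε > 0, ∃ L > 0,
      ∀ s ∈ u, ∀ x₁ ∈ Metric.ball x₀ ε, ∀ x₂ ∈ Metric.ball x₀ ε,
        ‖fderiv ℝ f (s, x₁) - fderiv ℝ f (s, x₂)‖ ≤ L * ‖x₁ - x₂‖ := by
    intro t
    obtain ⟨U, hU, L, hL, hlip⟩ := hf' (t, x₀)
    rw [mem_nhds_prod_iff] at hU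
    obtain ⟨u, hu, v, hv, huv⟩ := hU
    obtain ⟨ε, hε, hball⟩ := Metric.mem_nhds_iff.mp hv
    refine ⟨u, hu, ε, hε, L, hL, fun s hs x₁ hx₁ x₂ hx₂ => ?_⟩
    have h1 : (s, x₁) ∈ U := huv ⟨hs, hball hx₁⟩
    have h2 : (s, x₂) ∈ U := huv ⟨hs, hball hx₂⟩
    have := hlip _ h1 _ h2
    have hnorm : ‖((s, x₁) : ℝ × E) - (s, x₂)‖ = ‖x₁ - x₂‖ := by
      simp [Prod.norm_def]
    rwa [hnorm] at this
  choose u hu ε hε L hL hprop using key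
  obtain ⟨T, -, hT⟩ := isCompact_Icc.elim_nhds_subcover u (fun t _ => hu t)
  by_cases hTne : T.Nonempty
  · refine ⟨T.inf' hTne ε, ?_, T.sup' hTne L, ?_, ?_⟩
    · exact (Finset.lt_inf'_iff hTne).mpr fun i _ => hε i
    · obtain ⟨i, hi⟩ := hTne
      exact lt_of_lt_of_le (hL i) (Finset.le_sup' L hi)
    · intro t ht x₁ hx₁ x₂ hx₂
      obtain ⟨i, hi, hti⟩ := Set.mem_iUnion₂.mp (hT ht)
      have hδε : T.inf' hTne ε ≤ ε i := Finset.inf'_le ε hi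
      have := hprop i t hti x₁ (lt_of_lt_of_le hx₁ hδε) x₂ (lt_of_lt_of_le hx₂ hδε)
      calc ‖fderiv ℝ f (t, x₁) - fderiv ℝ f (t, x₂)‖ ≤ L i * ‖x₁ - x₂‖ := this
        _ ≤ T.sup' hTne L * ‖x₁ - x₂‖ :=
          mul_le_mul_of_nonneg_right (Finset.le_sup' L hi) (norm_nonneg _)
  · refine ⟨1, one_pos, 1, one_pos, fun t ht => absurd (hT ht) ?_⟩
    simp [Finset.not_nonempty_iff_eq_empty.mp hTne]

end aux

theorem integral_has_locally_lipschitz_differential {k : ℕ} (a b : ℝ) (hab : a < b)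
    (f : ℝ × EuclideanSpace ℝ (Fin k) → ℝ)
    (hf : ContDiff ℝ 1 f) (hf' : HasLocallyLipschitzDifferential f) :
    ContDiff ℝ 1 (fun x : EuclideanSpace ℝ (Fin k) => ∫ t in a..b, f (t, x)) ∧
      HasLocallyLipschitzDifferential
        (fun x : EuclideanSpace ℝ (Fin k) => ∫ t in a..b, f (t, x)) := by
  have hab' : a ≤ b := hab.le
  have hfc : Continuous f := hf.continuous
  have hfd : Differentiable ℝ f := hf.differentiable one_ne_zero
  have hDc : Continuous (fderiv ℝ f) := hf.continuous_fderiv one_ne_zero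
  set D₂ : ℝ → EuclideanSpace ℝ (Fin k) → (EuclideanSpace ℝ (Fin k) →L[ℝ] ℝ) :=
    fun t x => (fderiv ℝ f (t, x)).comp (ContinuousLinearMap.inr ℝ ℝ (EuclideanSpace ℝ (Fin k))) with hD₂
  have hinr : ‖(ContinuousLinearMap.inr ℝ ℝ (EuclideanSpace ℝ (Fin k)))‖ ≤ 1 := by
    refine ContinuousLinearMap.opNorm_le_bound _ zero_le_one fun x => ?_
    simp [Prod.norm_def]
  have hD₂le : ∀ t x, ‖D₂ t x‖ ≤ ‖fderiv ℝ f (t, x)‖ := by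
    intro t x
    calc ‖D₂ t x‖ ≤ ‖fderiv ℝ f (t, x)‖ * ‖(ContinuousLinearMap.inr ℝ ℝ (EuclideanSpace ℝ (Fin k)))‖ :=
          ContinuousLinearMap.opNorm_comp_le _ _
      _ ≤ ‖fderiv ℝ f (t, x)‖ * 1 :=
          mul_le_mul_of_nonneg_left hinr (norm_nonneg _)
      _ = _ := mul_one _
  have hD₂cont : ∀ x : EuclideanSpace ℝ (Fin k), Continuous fun t => D₂ t x := fun x =>
    (hDc.comp (continuous_id.prodMk continuous_const)).clm_comp continuous_const
  have hpartial : ∀ t : ℝ, ∀ x : EuclideanSpace ℝ (Fin k), HasFDerivAt (fun y => f (t, y)) (D₂ t x) x := by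
    intro t x
    exact (hfd (t, x)).hasFDerivAt.comp x (hasFDerivAt_prodMk_right t x)
  -- derivative of the integral
  have hB : ∀ x₀ : EuclideanSpace ℝ (Fin k), HasFDerivAt (fun x : EuclideanSpace ℝ (Fin k) => ∫ t in a..b, f (t, x))
      (∫ t in a..b, D₂ t x₀) x₀ := by
    intro x₀
    obtain ⟨C, hC⟩ := (isCompact_Icc.prod (isCompact_closedBall x₀ 1)).exists_bound_of_continuousOn
      (hDc.continuousOn (s := Icc a b ×ˢ Metric.closedBall x₀ 1))
    apply intervalIntegral.hasFDerivAt_integral_of_dominated_of_fderiv_le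
      (F := fun x t => f (t, x)) (F' := fun x t => D₂ t x) (bound := fun _ => C)
      (s := Metric.ball x₀ 1) (Metric.ball_mem_nhds x₀ one_pos)
    · exact Eventually.of_forall fun x =>
        ((hfc.comp (continuous_id.prodMk continuous_const)).aestronglyMeasurable)
    · exact (hfc.comp (continuous_id.prodMk continuous_const)).intervalIntegrable a b
    · exact (hD₂cont x₀).aestronglyMeasurable
    · refine Eventually.of_forall fun t ht x hx => ?_
      have ht' : t ∈ Icc a b := mem_Icc_of_Ioc (by rwa [uIoc_of_le hab'] at ht)
      exact (hD₂le t x).trans (hC (t, x) ⟨ht', Metric.ball_subset_closedBall hx⟩)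
    · exact intervalIntegrable_const
    · exact Eventually.of_forall fun t _ x _ => hpartial t x
  set B : EuclideanSpace ℝ (Fin k) → (EuclideanSpace ℝ (Fin k) →L[ℝ] ℝ) := fun x => ∫ t in a..b, D₂ t x with hBdef
  have hfderiv : ∀ x, fderiv ℝ (fun x : EuclideanSpace ℝ (Fin k) => ∫ t in a..b, f (t, x)) x = B x :=
    fun x => (hB x).fderiv
  -- the local Lipschitz estimate for B
  have hBlip : ∀ x₀ : EuclideanSpace ℝ (Fin k), ∃ δ > 0, ∃ L > 0, ∀ x₁ ∈ Metric.ball x₀ δ, ∀ x₂ ∈ Metric.ball x₀ δ,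
      ‖B x₁ - B x₂‖ ≤ L * ‖x₁ - x₂‖ := by
    intro x₀
    obtain ⟨δ, hδ, L, hL, hlip⟩ := tube_lemma a b f hf' x₀
    refine ⟨δ, hδ, L * (b - a) + 1, by nlinarith, fun x₁ hx₁ x₂ hx₂ => ?_⟩
    have hint : ∀ x : EuclideanSpace ℝ (Fin k), IntervalIntegrable (fun t => D₂ t x) volume a b :=
      fun x => (hD₂cont x).intervalIntegrable a b
    have hsub : B x₁ - B x₂ = ∫ t in a..b, (D₂ t x₁ - D₂ t x₂) := by
      rw [hBdef, ← intervalIntegral.integral_sub (hint x₁) (hint x₂)]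
    rw [hsub]
    have hbd : ∀ t ∈ Set.uIoc a b, ‖D₂ t x₁ - D₂ t x₂‖ ≤ L * ‖x₁ - x₂‖ := by
      intro t ht
      have ht' : t ∈ Icc a b := mem_Icc_of_Ioc (by rwa [uIoc_of_le hab'] at ht)
      have heq : D₂ t x₁ - D₂ t x₂
          = (fderiv ℝ f (t, x₁) - fderiv ℝ f (t, x₂)).comp (ContinuousLinearMap.inr ℝ ℝ (EuclideanSpace ℝ (Fin k))) := by
        ext y; simp [hD₂]
      rw [heq]
      calc ‖(fderiv ℝ f (t, x₁) - fderiv ℝ f (t, x₂)).comp (ContinuousLinearMap.inr ℝ ℝ (EuclideanSpace ℝ (Fin k)))‖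
          ≤ ‖fderiv ℝ f (t, x₁) - fderiv ℝ f (t, x₂)‖ * ‖(ContinuousLinearMap.inr ℝ ℝ (EuclideanSpace ℝ (Fin k)))‖ :=
            ContinuousLinearMap.opNorm_comp_le _ _
        _ ≤ ‖fderiv ℝ f (t, x₁) - fderiv ℝ f (t, x₂)‖ * 1 :=
            mul_le_mul_of_nonneg_left hinr (norm_nonneg _)
        _ = ‖fderiv ℝ f (t, x₁) - fderiv ℝ f (t, x₂)‖ := mul_one _
        _ ≤ L * ‖x₁ - x₂‖ := hlip t ht' x₁ hx₁ x₂ hx₂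
    calc ‖∫ t in a..b, (D₂ t x₁ - D₂ t x₂)‖ ≤ L * ‖x₁ - x₂‖ * |b - a| :=
          intervalIntegral.norm_integral_le_of_norm_le_const hbd
      _ = L * (b - a) * ‖x₁ - x₂‖ := by
          rw [abs_of_nonneg (by linarith)]; ring
      _ ≤ (L * (b - a) + 1) * ‖x₁ - x₂‖ :=
          mul_le_mul_of_nonneg_right (by linarith) (norm_nonneg _)
  have hBcont : Continuous B := by
    rw [continuous_iff_continuousAt]
    intro x₀
    obtain ⟨δ, hδ, L, hL, hlip⟩ := hBlip x₀
    have : LipschitzOnWith (Real.toNNReal L) B (Metric.ball x₀ δ) := by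
      apply LipschitzOnWith.of_dist_le_mul
      intro x₁ hx₁ x₂ hx₂
      rw [dist_eq_norm, dist_eq_norm]
      exact (hlip x₁ hx₁ x₂ hx₂).trans (by
        apply mul_le_mul_of_nonneg_right _ (norm_nonneg _)
        exact le_of_eq (Real.coe_toNNReal L hL.le).symm)
    exact this.continuousOn.continuousAt (Metric.ball_mem_nhds x₀ hδ)
  constructor
  · rw [contDiff_one_iff_fderiv]
    refine ⟨fun x => (hB x).differentiableAt, ?_⟩
    have : fderiv ℝ (fun x : EuclideanSpace ℝ (Fin k) => ∫ t in a..b, f (t, x)) = B := funext hfderiv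
    rw [this]; exact hBcont
  · intro x₀
    obtain ⟨δ, hδ, L, hL, hlip⟩ := hBlip x₀
    refine ⟨Metric.ball x₀ δ, Metric.ball_mem_nhds x₀ hδ, L, hL, fun x₁ hx₁ x₂ hx₂ => ?_⟩
    rw [hfderiv x₁, hfderiv x₂]
    exact hlip x₁ hx₁ x₂ hx₂
end
end

section
/- Let L : ℝᵈ → [0,∞) be a C¹ function and Θ : [0,∞) → ℝᵈ a gradient flow solution, Θ'(t) = −∇L(Θ(t)) for all t ≥ 0. Then liminf_{t→∞} (‖Θ(0)‖ + √(t·L(Θ(0)))) · ‖Θ'(t)‖ = 0; consequently liminf_{t→∞} ‖Θ(t)‖·‖∇L(Θ(t))‖ = 0. -/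
open Filter MeasureTheory Set

noncomputable section

variable {d : ℕ}

lemma gf_chain {L : EuclideanSpace ℝ (Fin d) → ℝ} (hL : ContDiff ℝ 1 L)
    {Θ : ℝ → EuclideanSpace ℝ (Fin d)} {t : ℝ}
    (hΘt : HasDerivAt Θ (-(gradient L (Θ t))) t) :
    HasDerivAt (fun s => L (Θ s)) (-‖gradient L (Θ t)‖ ^ 2) t := by
  have hd := (hL.differentiable one_ne_zero (Θ t)).hasGradientAt
  have h2 := hd.hasFDerivAt.comp_hasDerivAt t hΘt
  refine h2.congr_deriv ?_
  rw [InnerProductSpace.toDual_apply_apply, inner_neg_right, real_inner_self_eq_norm_sq]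

lemma gf_gradcont {L : EuclideanSpace ℝ (Fin d) → ℝ} (hL : ContDiff ℝ 1 L) :
    Continuous (gradient L) := by
  have h : Continuous (fderiv ℝ L) := hL.continuous_fderiv one_ne_zero
  exact (InnerProductSpace.toDual ℝ (EuclideanSpace ℝ (Fin d))).symm.continuous.comp h

lemma gf_key {L : EuclideanSpace ℝ (Fin d) → ℝ} (hL : ContDiff ℝ 1 L)
    {Θ : ℝ → EuclideanSpace ℝ (Fin d)}
    (hΘ : ∀ t : ℝ, 0 ≤ t → HasDerivAt Θ (-(gradient L (Θ t))) t)
    {a b : ℝ} (ha : 0 ≤ a) (hab : a ≤ b) :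
    ∫ s in a..b, ‖gradient L (Θ s)‖ ^ 2 = L (Θ a) - L (Θ b) := by
  have hΘc : ContinuousOn Θ (Icc a b) := fun s hs =>
    ((hΘ s (ha.trans hs.1)).continuousAt).continuousWithinAt
  have hcont : ContinuousOn (fun s => ‖gradient L (Θ s)‖ ^ 2) (Icc a b) :=
    (((gf_gradcont hL).comp_continuousOn hΘc).norm.pow 2)
  have hint : IntervalIntegrable (fun s => ‖gradient L (Θ s)‖ ^ 2) volume a b := by
    apply ContinuousOn.intervalIntegrable
    rwa [uIcc_of_le hab]
  have hftc := intervalIntegral.integral_eq_sub_of_hasDerivAt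
    (f := fun s => L (Θ s)) (f' := fun s => -‖gradient L (Θ s)‖ ^ 2)
    (fun s hs => by
      rw [uIcc_of_le hab] at hs
      exact gf_chain hL (hΘ s (ha.trans hs.1)))
    hint.neg
  rw [intervalIntegral.integral_neg] at hftc
  linarith

lemma gf_normbound {L : EuclideanSpace ℝ (Fin d) → ℝ} (hL : ContDiff ℝ 1 L)
    (hL0 : ∀ θ, 0 ≤ L θ)
    {Θ : ℝ → EuclideanSpace ℝ (Fin d)}
    (hΘ : ∀ t : ℝ, 0 ≤ t → HasDerivAt Θ (-(gradient L (Θ t))) t)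
    {t : ℝ} (ht : 0 ≤ t) :
    ‖Θ t‖ ≤ ‖Θ 0‖ + Real.sqrt (t * L (Θ 0)) := by
  have hΘc : ContinuousOn Θ (Icc 0 t) := fun s hs => ((hΘ s hs.1).continuousAt).continuousWithinAt
  have hc1 : ContinuousOn (fun s => ‖gradient L (Θ s)‖) (Icc 0 t) :=
    ((gf_gradcont hL).comp_continuousOn hΘc).norm
  have hint1 : IntervalIntegrable (fun s => ‖gradient L (Θ s)‖) volume 0 t := by
    apply ContinuousOn.intervalIntegrable; rwa [uIcc_of_le ht]
  have hint2 : IntervalIntegrable (fun s => ‖gradient L (Θ s)‖ ^ 2) volume 0 t := by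
    apply ContinuousOn.intervalIntegrable; rw [uIcc_of_le ht]; exact hc1.pow 2
  set A := ∫ s in (0:ℝ)..t, ‖gradient L (Θ s)‖ with hA
  set B := ∫ s in (0:ℝ)..t, ‖gradient L (Θ s)‖ ^ 2 with hB
  have hAnn : 0 ≤ A := intervalIntegral.integral_nonneg ht (fun s _ => norm_nonneg _)
  have hBle : B ≤ L (Θ 0) := by
    rw [hB, gf_key hL hΘ le_rfl ht]
    linarith [hL0 (Θ t)]
  -- Cauchy-Schwarz : A^2 ≤ t * B
  have hCS : A ^ 2 ≤ t * B := by
    rcases eq_or_lt_of_le ht with h0 | h0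
    · have : A = 0 := by rw [hA, ← h0, intervalIntegral.integral_same]
      simp [this, ← h0]
    · have hnn : 0 ≤ ∫ s in (0:ℝ)..t, (t * ‖gradient L (Θ s)‖ - A) ^ 2 :=
        intervalIntegral.integral_nonneg ht (fun s _ => sq_nonneg _)
      have hexp : (fun s => (t * ‖gradient L (Θ s)‖ - A) ^ 2)
          = fun s => t ^ 2 * ‖gradient L (Θ s)‖ ^ 2 - (2 * t * A) * ‖gradient L (Θ s)‖ + A ^ 2 := by
        funext s; ring
      rw [hexp] at hnn
      rw [intervalIntegral.integral_add (((hint2.const_mul _).sub (hint1.const_mul _)))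
        intervalIntegrable_const,
        intervalIntegral.integral_sub (hint2.const_mul _) (hint1.const_mul _),
        intervalIntegral.integral_const_mul, intervalIntegral.integral_const_mul,
        intervalIntegral.integral_const, ← hA, ← hB] at hnn
      simp only [smul_eq_mul, sub_zero] at hnn
      nlinarith
  -- FTC for Θ
  have hftcΘ : ∫ s in (0:ℝ)..t, -(gradient L (Θ s)) = Θ t - Θ 0 := by
    apply intervalIntegral.integral_eq_sub_of_hasDerivAt
    · intro s hs
      rw [uIcc_of_le ht] at hs
      exact hΘ s hs.1
    · apply ContinuousOn.intervalIntegrable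
      rw [uIcc_of_le ht]
      exact ((gf_gradcont hL).comp_continuousOn hΘc).neg
  have hdist : ‖Θ t - Θ 0‖ ≤ A := by
    rw [← hftcΘ]
    calc ‖∫ s in (0:ℝ)..t, -(gradient L (Θ s))‖
        ≤ ∫ s in (0:ℝ)..t, ‖-(gradient L (Θ s))‖ :=
          intervalIntegral.norm_integral_le_integral_norm ht
      _ = A := by simp [hA]
  have hAsq : A ≤ Real.sqrt (t * L (Θ 0)) := by
    have h1 : A ^ 2 ≤ t * L (Θ 0) := hCS.trans (by nlinarith)
    calc A = Real.sqrt (A ^ 2) := by rw [Real.sqrt_sq hAnn]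
      _ ≤ Real.sqrt (t * L (Θ 0)) := Real.sqrt_le_sqrt h1
  calc ‖Θ t‖ ≤ ‖Θ 0‖ + ‖Θ t - Θ 0‖ := by
        have := norm_sub_norm_le (Θ t) (Θ 0); linarith [norm_sub_rev (Θ t) (Θ 0)]
    _ ≤ ‖Θ 0‖ + Real.sqrt (t * L (Θ 0)) := by linarith [hdist.trans hAsq]

lemma gf_logint {a b T X : ℝ} (hb : 0 < b) (hpos : 0 < a + b * T) (hTX : T ≤ X) :
    ∫ s in T..X, (a + b * s)⁻¹ = (Real.log (a + b * X) - Real.log (a + b * T)) / b := by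
  have hppt : ∀ s, T ≤ s → 0 < a + b * s := fun s hs => by nlinarith
  have hderiv : ∀ s ∈ uIcc T X, HasDerivAt (fun u => Real.log (a + b * u) / b) ((a + b * s)⁻¹) s := by
    intro s hs
    rw [uIcc_of_le hTX] at hs
    have hps : 0 < a + b * s := hppt s hs.1
    have h1 : HasDerivAt (fun u : ℝ => a + b * u) b s := by
      simpa using ((hasDerivAt_id s).const_mul b).const_add a
    have h2 := (Real.hasDerivAt_log hps.ne').comp s h1
    have h3 := h2.div_const b
    refine h3.congr_deriv ?_
    rw [mul_div_assoc, div_self hb.ne', mul_one]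
  have hcont : ContinuousOn (fun s => (a + b * s)⁻¹) (uIcc T X) := by
    rw [uIcc_of_le hTX]
    exact (continuous_const.add (continuous_const.mul continuous_id)).continuousOn.inv₀
      fun s hs => (hppt s hs.1).ne'
  have := intervalIntegral.integral_eq_sub_of_hasDerivAt hderiv hcont.intervalIntegrable
  rw [this]
  ring

theorem gradient_flow_liminf_zero {d : ℕ}
    (L : EuclideanSpace ℝ (Fin d) → ℝ) (hL : ContDiff ℝ 1 L) (hL0 : ∀ θ, 0 ≤ L θ)
    (Θ : ℝ → EuclideanSpace ℝ (Fin d))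
    (hΘ : ∀ t : ℝ, 0 ≤ t → HasDerivAt Θ (-(gradient L (Θ t))) t) :
    Filter.liminf
        (fun t : ℝ => (‖Θ 0‖ + Real.sqrt (t * L (Θ 0))) * ‖gradient L (Θ t)‖) atTop = 0 ∧
      Filter.liminf (fun t : ℝ => ‖Θ t‖ * ‖gradient L (Θ t)‖) atTop = 0 := by
  by_cases hc : L (Θ 0) = 0
  · -- degenerate case : gradient vanishes identically along the flow
    have hgrad0 : ∀ t : ℝ, 0 ≤ t → gradient L (Θ t) = 0 := by
      intro t ht
      have hk := gf_key hL hΘ le_rfl ht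
      have hnn : 0 ≤ ∫ s in (0:ℝ)..t, ‖gradient L (Θ s)‖ ^ 2 :=
        intervalIntegral.integral_nonneg ht (fun s _ => sq_nonneg _)
      have hLt : L (Θ t) = 0 := le_antisymm (by linarith [hc ▸ hk]) (hL0 _)
      have hmin : IsLocalMin L (Θ t) :=
        Filter.Eventually.of_forall (fun y => by rw [hLt]; exact hL0 y)
      have hfz := hmin.fderiv_eq_zero
      rw [gradient, hfz, map_zero]
    have hev1 : ∀ᶠ t in atTop,
        (‖Θ 0‖ + Real.sqrt (t * L (Θ 0))) * ‖gradient L (Θ t)‖ = (0:ℝ) := by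
      filter_upwards [eventually_ge_atTop (0:ℝ)] with t ht
      simp [hgrad0 t ht]
    have hev2 : ∀ᶠ t in atTop, ‖Θ t‖ * ‖gradient L (Θ t)‖ = (0:ℝ) := by
      filter_upwards [eventually_ge_atTop (0:ℝ)] with t ht
      simp [hgrad0 t ht]
    constructor
    · rw [liminf_congr hev1, liminf_const]
    · rw [liminf_congr hev2, liminf_const]
  · have hpos : 0 < L (Θ 0) := lt_of_le_of_ne (hL0 _) (Ne.symm hc)
    have claim : ∀ F : ℝ → ℝ, (∀ t, 0 ≤ F t) →
        (∀ t, 0 ≤ t → F t ≤ (‖Θ 0‖ + Real.sqrt (t * L (Θ 0))) * ‖gradient L (Θ t)‖) →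
        liminf F atTop = 0 := by
      intro F hF0 hFle
      have hbdd : IsBoundedUnder (· ≥ ·) atTop F := isBoundedUnder_of ⟨0, fun t => hF0 t⟩
      have hfreq : ∀ ε : ℝ, 0 < ε → ∃ᶠ t in atTop, F t ≤ ε := by
        intro ε hε
        by_contra hcon
        rw [Filter.not_frequently] at hcon
        obtain ⟨T₀, hT₀⟩ := eventually_atTop.mp hcon
        set T := max T₀ 1 with hTdef
        have hT1 : (1:ℝ) ≤ T := le_max_right _ _
        have hTnn : (0:ℝ) ≤ T := by linarith
        set a := 2 * ‖Θ 0‖ ^ 2 with hadef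
        set b := 2 * L (Θ 0) with hbdef
        have hbpos : 0 < b := by positivity
        have hann : 0 ≤ a := by positivity
        have hpt : ∀ s, T ≤ s → ε ^ 2 * (a + b * s)⁻¹ ≤ ‖gradient L (Θ s)‖ ^ 2 := by
          intro s hs
          have hs0 : (0:ℝ) ≤ s := le_trans hTnn hs
          have h1 : ε < F s := not_le.mp (hT₀ s (le_trans (le_max_left _ _) hs))
          have h2 := hFle s hs0
          have hsq := Real.sq_sqrt (mul_nonneg hs0 (hL0 (Θ 0)))
          have hsnn := Real.sqrt_nonneg (s * L (Θ 0))
          have habs : 0 < a + b * s := by nlinarith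
          have hg2 : (‖Θ 0‖ + Real.sqrt (s * L (Θ 0))) ^ 2 ≤ a + b * s := by
            nlinarith [sq_nonneg (‖Θ 0‖ - Real.sqrt (s * L (Θ 0)))]
          have hkey : ε ^ 2 ≤ ‖gradient L (Θ s)‖ ^ 2 * (a + b * s) := by
            have h4 := pow_le_pow_left₀ hε.le (h1.le.trans h2) 2
            rw [mul_pow] at h4
            calc ε ^ 2 ≤ (‖Θ 0‖ + Real.sqrt (s * L (Θ 0))) ^ 2 * ‖gradient L (Θ s)‖ ^ 2 := h4
              _ ≤ (a + b * s) * ‖gradient L (Θ s)‖ ^ 2 :=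
                  mul_le_mul_of_nonneg_right hg2 (sq_nonneg _)
              _ = ‖gradient L (Θ s)‖ ^ 2 * (a + b * s) := mul_comm _ _
          calc ε ^ 2 * (a + b * s)⁻¹
              ≤ (‖gradient L (Θ s)‖ ^ 2 * (a + b * s)) * (a + b * s)⁻¹ := by
                exact mul_le_mul_of_nonneg_right hkey (inv_nonneg.mpr habs.le)
            _ = ‖gradient L (Θ s)‖ ^ 2 := by field_simp
        have hcomp : ∀ X, T ≤ X →
            ε ^ 2 * ((Real.log (a + b * X) - Real.log (a + b * T)) / b) ≤ L (Θ 0) := by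
          intro X hX
          have hppt : ∀ s, T ≤ s → 0 < a + b * s := fun s hs => by nlinarith
          have hΘc : ContinuousOn Θ (Icc T X) := fun s hs =>
            ((hΘ s (hTnn.trans hs.1)).continuousAt).continuousWithinAt
          have hint_rhs : IntervalIntegrable (fun s => ‖gradient L (Θ s)‖ ^ 2) volume T X := by
            apply ContinuousOn.intervalIntegrable
            rw [uIcc_of_le hX]
            exact ((gf_gradcont hL).comp_continuousOn hΘc).norm.pow 2
          have hint_lhs : IntervalIntegrable (fun s => ε ^ 2 * (a + b * s)⁻¹) volume T X := by
            apply ContinuousOn.intervalIntegrable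
            rw [uIcc_of_le hX]
            exact continuousOn_const.mul
              ((continuous_const.add (continuous_const.mul continuous_id)).continuousOn.inv₀
                fun s hs => (hppt s hs.1).ne')
          have hmono := intervalIntegral.integral_mono_on hX hint_lhs hint_rhs
            (fun s hs => hpt s hs.1)
          have hlog := gf_logint hbpos (hppt T le_rfl) hX
          have hTle0 : L (Θ T) ≤ L (Θ 0) := by
            have hk := gf_key hL hΘ le_rfl hTnn
            have hnn : 0 ≤ ∫ s in (0:ℝ)..T, ‖gradient L (Θ s)‖ ^ 2 :=
              intervalIntegral.integral_nonneg hTnn (fun s _ => sq_nonneg _)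
            linarith
          calc ε ^ 2 * ((Real.log (a + b * X) - Real.log (a + b * T)) / b)
              = ∫ s in T..X, ε ^ 2 * (a + b * s)⁻¹ := by
                rw [intervalIntegral.integral_const_mul, hlog]
            _ ≤ ∫ s in T..X, ‖gradient L (Θ s)‖ ^ 2 := hmono
            _ = L (Θ T) - L (Θ X) := gf_key hL hΘ hTnn hX
            _ ≤ L (Θ 0) := by linarith [hL0 (Θ X)]
        have htend : Tendsto
            (fun X => ε ^ 2 * ((Real.log (a + b * X) - Real.log (a + b * T)) / b))
            atTop atTop := by
          have h1 : Tendsto (fun X : ℝ => a + b * X) atTop atTop :=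
            tendsto_atTop_add_const_left _ a (Tendsto.const_mul_atTop hbpos tendsto_id)
          have h2 : Tendsto (fun X : ℝ => Real.log (a + b * X)) atTop atTop :=
            Real.tendsto_log_atTop.comp h1
          have h3 : Tendsto (fun X : ℝ => Real.log (a + b * X) - Real.log (a + b * T))
              atTop atTop := by
            simpa [sub_eq_add_neg] using
              tendsto_atTop_add_const_right atTop (-Real.log (a + b * T)) h2
          exact Tendsto.const_mul_atTop (by positivity) (h3.atTop_div_const hbpos)
        obtain ⟨X, hX1, hX2⟩ :=
          ((htend.eventually_gt_atTop (L (Θ 0))).and (eventually_ge_atTop T)).exists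
        exact absurd (hcomp X hX2) (not_le.mpr hX1)
      have hcob : IsCoboundedUnder (· ≥ ·) atTop F :=
        IsCoboundedUnder.of_frequently_le (hfreq 1 one_pos)
      have hge : 0 ≤ liminf F atTop :=
        le_liminf_of_le hcob (Filter.Eventually.of_forall hF0)
      have hle : ∀ ε : ℝ, 0 < ε → liminf F atTop ≤ ε := fun ε hε =>
        liminf_le_of_frequently_le (hfreq ε hε) hbdd
      refine le_antisymm ?_ hge
      by_contra h
      push_neg at h
      have := hle (liminf F atTop / 2) (by linarith)
      linarith
    constructor
    · exact claim _ (fun t => mul_nonneg (add_nonneg (norm_nonneg _) (Real.sqrt_nonneg _))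
        (norm_nonneg _)) (fun t _ => le_rfl)
    · exact claim _ (fun t => mul_nonneg (norm_nonneg _) (norm_nonneg _))
        (fun t ht => mul_le_mul_of_nonneg_right (gf_normbound hL hL0 hΘ ht) (norm_nonneg _))
end
end

section
/- For integers n ≥ 1 and m ≥ 0, the space ℝ[X₀, …, X_m]_n of homogeneous polynomials of degree n in m+1 variables is spanned by the n-th powers of linear forms of the special shape (X₀ + a₁X₁ + ⋯ + a_mX_m)ⁿ with a₁, …, a_m ∈ ℝ: that is, ℝ[X₀, …, X_m]_n = span{(X₀ + a₁X₁ + ⋯ + a_mX_m)ⁿ : a₁, …, a_m ∈ ℝ}. -/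
set_option synthInstance.maxHeartbeats 1000000
set_option maxHeartbeats 1000000
open MvPolynomial Finset

private lemma expand_pow (n m : ℕ) (a : Fin m → ℝ) :
    (X 0 + ∑ i : Fin m, C (a i) * X i.succ) ^ n
      = ∑ k ∈ piAntidiag (univ : Finset (Fin (m+1))) n,
          ((Nat.multinomial univ k : ℝ) * ∏ i : Fin m, a i ^ k i.succ) •
            (monomial (Finsupp.equivFunOnFinite.symm k) (1:ℝ)) := by
  have h1 : (X 0 + ∑ i : Fin m, C (a i) * X i.succ : MvPolynomial (Fin (m+1)) ℝ)
      = ∑ j : Fin (m+1), Fin.cases (X 0) (fun i => C (a i) * X i.succ) j := by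
    rw [Fin.sum_univ_succ]; simp
  rw [h1, Finset.sum_pow_eq_sum_piAntidiag]
  refine Finset.sum_congr rfl fun k hk => ?_
  rw [Fin.prod_univ_succ]
  simp only [Fin.cases_zero, Fin.cases_succ, mul_pow, ← C_pow]
  rw [Finset.prod_mul_distrib, ← map_prod]
  rw [monomial_eq, Finsupp.prod_fintype _ _ (fun i => pow_zero _), Fin.prod_univ_succ]
  simp only [Finsupp.coe_equivFunOnFinite_symm, C_1, one_mul]
  rw [smul_eq_C_mul, map_mul, map_prod, map_natCast C]
  ring

private lemma monomial_mem_span (n m : ℕ) (d : Fin (m+1) → ℕ) (hd : ∑ j, d j = n) :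
    monomial (Finsupp.equivFunOnFinite.symm d) (1:ℝ) ∈
      Submodule.span ℝ
        {q : MvPolynomial (Fin (m + 1)) ℝ |
          ∃ a : Fin m → ℝ, q = (X 0 + ∑ i : Fin m, C (a i) * X i.succ) ^ n} := by
  set W := Submodule.span ℝ
        {q : MvPolynomial (Fin (m + 1)) ℝ |
          ∃ a : Fin m → ℝ, q = (X 0 + ∑ i : Fin m, C (a i) * X i.succ) ^ n} with hW
  by_contra hx
  obtain ⟨f, hf0, hfbot⟩ := Submodule.exists_dual_map_eq_bot_of_notMem hx inferInstance
  have hfW : ∀ w ∈ W, f w = 0 := by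
    intro w hw
    have : f w ∈ W.map f := Submodule.mem_map_of_mem hw
    rwa [hfbot, Submodule.mem_bot] at this
  -- the polynomial in the a-variables capturing f of the expansion
  set Q : MvPolynomial (Fin m) ℝ :=
    ∑ k ∈ piAntidiag (univ : Finset (Fin (m+1))) n,
      ((Nat.multinomial univ k : ℝ) * f (monomial (Finsupp.equivFunOnFinite.symm k) (1:ℝ))) •
        monomial (Finsupp.equivFunOnFinite.symm (fun i => k i.succ)) (1:ℝ) with hQ
  have hev : ∀ a : Fin m → ℝ, eval a Q = 0 := by
    intro a
    have hmem : (X 0 + ∑ i : Fin m, C (a i) * X i.succ) ^ n ∈ W :=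
      Submodule.subset_span ⟨a, rfl⟩
    have := hfW _ hmem
    rw [expand_pow, map_sum] at this
    rw [hQ, map_sum, ← this]
    refine Finset.sum_congr rfl fun k hk => ?_
    rw [show ∀ (c : ℝ) (p : MvPolynomial (Fin m) ℝ), eval a (c • p) = c * eval a p from
        fun c p => by rw [smul_eq_C_mul, map_mul, eval_C],
      show ∀ (c : ℝ) (p : MvPolynomial (Fin (m+1)) ℝ), f (c • p) = c * f p from
        fun c p => by rw [map_smul, smul_eq_mul],
      eval_monomial, Finsupp.prod_fintype _ _ (fun i => pow_zero _)]
    simp only [Finsupp.coe_equivFunOnFinite_symm, one_mul]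
    ring
  have hQ0 : Q = 0 := by
    apply MvPolynomial.funext; intro a; rw [hev a, map_zero]
  -- extract the coefficient at tail of d
  have hdmem : d ∈ piAntidiag (univ : Finset (Fin (m+1))) n := by
    rw [mem_piAntidiag]; exact ⟨hd, fun i _ => mem_univ i⟩
  have hcoeff := congrArg (coeff (Finsupp.equivFunOnFinite.symm (fun i => d i.succ))) hQ0
  rw [hQ, MvPolynomial.coeff_sum] at hcoeff
  simp only [coeff_smul, coeff_monomial, coeff_zero, smul_eq_mul] at hcoeff
  rw [Finset.sum_eq_single d] at hcoeff
  · simp only [eq_self_iff_true, if_true, mul_one] at hcoeff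
    rcases mul_eq_zero.mp hcoeff with h | h
    · exact absurd (Nat.cast_eq_zero.mp h) (Nat.multinomial_pos _ _).ne'
    · exact hf0 h
  · intro k hk hkd
    rw [if_neg, mul_zero]
    intro hEq
    apply hkd
    have htail : ∀ i : Fin m, k i.succ = d i.succ := by
      intro i
      have := congrArg (fun g => g i) (congrArg Finsupp.equivFunOnFinite.symm.symm hEq)
      simpa using this
    have hk0 : k 0 = d 0 := by
      rw [mem_piAntidiag] at hk
      have h1 : k 0 + ∑ i : Fin m, k i.succ = n := by
        rw [← Fin.sum_univ_succ]; exact hk.1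
      have h2 : d 0 + ∑ i : Fin m, d i.succ = n := by
        rw [← Fin.sum_univ_succ]; exact hd
      have : ∑ i : Fin m, k i.succ = ∑ i : Fin m, d i.succ :=
        Finset.sum_congr rfl fun i _ => htail i
      omega
    funext j
    refine Fin.cases hk0 htail j
  · intro h; exact absurd hdmem h

theorem homogeneous_polynomials_spanned_by_powers_of_linear_forms (n m : ℕ) (hn : 1 ≤ n) :
    (MvPolynomial.homogeneousSubmodule (Fin (m + 1)) ℝ n : Submodule ℝ (MvPolynomial (Fin (m + 1)) ℝ)) =
      Submodule.span ℝ
        {q : MvPolynomial (Fin (m + 1)) ℝ |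
          ∃ a : Fin m → ℝ,
            q = (X 0 + ∑ i : Fin m, C (a i) * X i.succ) ^ n} := by
  apply le_antisymm
  · intro p hp
    rw [mem_homogeneousSubmodule] at hp
    rw [← p.support_sum_monomial_coeff]
    refine Submodule.sum_mem _ fun d hd => ?_
    have hdeg : ∑ j, d j = n := by
      have := hp (MvPolynomial.mem_support_iff.mp hd)
      simpa [Finsupp.weight, Finsupp.linearCombination, Finsupp.sum_fintype] using this
    have := monomial_mem_span n m d (by simpa using hdeg)
    rw [Finsupp.equivFunOnFinite_symm_coe] at this
    have : monomial d (coeff d p) = (coeff d p) • monomial d (1:ℝ) := by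
      rw [smul_monomial, smul_eq_mul, mul_one]
    rw [this]
    exact Submodule.smul_mem _ _ (by
      have h := monomial_mem_span n m d hdeg
      rwa [Finsupp.equivFunOnFinite_symm_coe] at h)
  · rw [Submodule.span_le]
    rintro q ⟨a, rfl⟩
    rw [SetLike.mem_coe, mem_homogeneousSubmodule]
    have hlin : (X 0 + ∑ i : Fin m, C (a i) * X i.succ : MvPolynomial (Fin (m+1)) ℝ).IsHomogeneous 1 := by
      apply (isHomogeneous_X _ _).add
      apply IsHomogeneous.sum
      intro i _
      exact (isHomogeneous_X _ _).C_mul _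
    simpa using hlin.pow n
end
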